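/- For b > a ≥ 0, the first-order Marcum Q-function satisfies Q₁(a,b) ≤ exp(-(b-a)²/2). -/

import Mathlib

open MeasureTheory

/-- The zeroth-order modified Bessel function of the first kind,
`I₀(x) = ∑_{k≥0} (x/2)^{2k}/(k!)²`. -/
noncomputable def besselI0 (x : ℝ) : ℝ := ∑' k : ℕ, (x / 2) ^ (2 * k) / (Nat.factorial k) ^ 2

/-- The first-order Marcum Q-function
`Q₁(a,b) = ∫_b^∞ t exp(-(t²+a²)/2) I₀(at) dt`. -/
noncomputable def marcumQ1 (a b : ℝ) : ℝ :=
  ∫ t in Set.Ioi b, t * Real.exp (-(t ^ 2 + a ^ 2) / 2) * besselI0 (a * t)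

/-- auxiliary polynomial -/
noncomputable def auxQ : ℕ → ℝ → ℝ
  | 0 => fun _ => 1
  | (k+1) => fun t => t ^ (2 * (k+1)) + 2 * (k+1) * auxQ k t

lemma auxQ_nonneg (k : ℕ) (t : ℝ) : 0 ≤ auxQ k t := by
  induction k with
  | zero => norm_num [auxQ]
  | succ k ih =>
    simp only [auxQ]
    have h1 : (0:ℝ) ≤ t ^ (2 * (k+1)) := by rw [pow_mul]; positivity
    positivity

lemma hasDerivAt_auxG (k : ℕ) (t : ℝ) :
    HasDerivAt (fun t => Real.exp (-t ^ 2 / 2) * auxQ k t)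
      (-(t ^ (2 * k + 1) * Real.exp (-t ^ 2 / 2))) t := by
  have hexp : HasDerivAt (fun t : ℝ => Real.exp (-t ^ 2 / 2))
      (-t * Real.exp (-t ^ 2 / 2)) t := by
    have h1 : HasDerivAt (fun t : ℝ => -t ^ 2 / 2) (-t) t := by
      have := ((hasDerivAt_pow 2 t).neg).div_const 2
      simpa using this.congr_deriv (by push_cast; ring)
    simpa [mul_comm] using h1.exp
  induction k with
  | zero =>
    simp only [auxQ, mul_one]
    convert hexp using 1; ring
  | succ k ih =>
    have hpow : HasDerivAt (fun t : ℝ => t ^ (2 * (k+1)))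
        (((2 * (k+1) : ℕ) : ℝ) * t ^ (2 * k + 1)) t := by
      simpa [show 2 * (k+1) - 1 = 2 * k + 1 from by omega] using hasDerivAt_pow (2 * (k+1)) t
    have h1 := (hexp.fun_mul hpow).fun_add (ih.const_mul (2 * ((k:ℝ) + 1)))
    have h2 : (fun t : ℝ => Real.exp (-t ^ 2 / 2) * auxQ (k+1) t)
        = fun t : ℝ => Real.exp (-t ^ 2 / 2) * t ^ (2 * (k+1))
            + 2 * ((k:ℝ) + 1) * (Real.exp (-t ^ 2 / 2) * auxQ k t) := by
      funext t
      simp only [auxQ]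
      push_cast
      ring
    rw [h2]
    refine h1.congr_deriv ?_
    push_cast
    ring

lemma tendsto_pow_mul_exp_neg_sq (n : ℕ) :
    Filter.Tendsto (fun t : ℝ => t ^ n * Real.exp (-t ^ 2 / 2)) Filter.atTop (nhds 0) := by
  have h1 : Filter.Tendsto (fun t : ℝ => t ^ 2 / 2) Filter.atTop Filter.atTop := by
    exact (Filter.tendsto_pow_atTop (by norm_num)).atTop_div_const (by norm_num)
  have h2 := (Real.tendsto_pow_mul_exp_neg_atTop_nhds_zero n).comp h1
  have h3 : Filter.Tendsto (fun t : ℝ => (t ^ 2 / 2) ^ n * Real.exp (-(t ^ 2 / 2)))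
      Filter.atTop (nhds 0) := h2
  have h4 : Filter.Tendsto (fun t : ℝ => 2 ^ n * ((t ^ 2 / 2) ^ n * Real.exp (-(t ^ 2 / 2))))
      Filter.atTop (nhds 0) := by
    simpa using h3.const_mul ((2:ℝ) ^ n)
  apply squeeze_zero' ?_ ?_ h4
  · filter_upwards [Filter.eventually_ge_atTop (0:ℝ)] with t ht
    positivity
  · filter_upwards [Filter.eventually_ge_atTop (1:ℝ)] with t ht
    have h5 : t ^ n ≤ t ^ (2 * n) := pow_le_pow_right₀ ht (by omega)
    have h6 : (2:ℝ) ^ n * ((t ^ 2 / 2) ^ n * Real.exp (-(t ^ 2 / 2)))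
        = t ^ (2 * n) * Real.exp (-t ^ 2 / 2) := by
      rw [pow_mul]; field_simp; try ring
      rw [mul_assoc, ← mul_pow]; norm_num
    rw [h6]
    exact mul_le_mul_of_nonneg_right h5 (Real.exp_pos _).le

lemma tendsto_auxG (k : ℕ) :
    Filter.Tendsto (fun t : ℝ => Real.exp (-t ^ 2 / 2) * auxQ k t) Filter.atTop (nhds 0) := by
  induction k with
  | zero =>
    simpa [auxQ] using tendsto_pow_mul_exp_neg_sq 0
  | succ k ih =>
    have h1 := (tendsto_pow_mul_exp_neg_sq (2 * (k+1))).add (ih.const_mul (2 * ((k:ℝ)+1)))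
    simp only [add_zero, mul_zero] at h1
    convert h1 using 2 with t
    simp only [auxQ]
    push_cast
    ring

lemma integrableOn_pow_exp (n : ℕ) {b : ℝ} (hb : 0 < b) :
    IntegrableOn (fun t : ℝ => t ^ n * Real.exp (-t ^ 2 / 2)) (Set.Ioi b) := by
  have h1 : IntegrableOn (fun x : ℝ => x ^ (n : ℝ) * Real.exp (-(1/2) * x ^ 2)) (Set.Ioi 0) :=
    integrableOn_rpow_mul_exp_neg_mul_sq (by norm_num)
      (lt_of_lt_of_le (by norm_num) (Nat.cast_nonneg n))
  have h2 : IntegrableOn (fun x : ℝ => x ^ (n : ℝ) * Real.exp (-(1/2) * x ^ 2)) (Set.Ioi b) :=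
    h1.mono_set (Set.Ioi_subset_Ioi hb.le)
  apply h2.congr_fun ?_ measurableSet_Ioi
  intro x hx
  show x ^ (n : ℝ) * Real.exp (-(1/2) * x ^ 2) = x ^ n * Real.exp (-x ^ 2 / 2)
  rw [Real.rpow_natCast]
  ring_nf

lemma integral_pow_exp (k : ℕ) {b : ℝ} (hb : 0 < b) :
    ∫ t in Set.Ioi b, t ^ (2 * k + 1) * Real.exp (-t ^ 2 / 2)
      = Real.exp (-b ^ 2 / 2) * auxQ k b := by
  have h := integral_Ioi_of_hasDerivAt_of_tendsto'
    (f := fun t => -(Real.exp (-t ^ 2 / 2) * auxQ k t))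
    (f' := fun t => t ^ (2 * k + 1) * Real.exp (-t ^ 2 / 2)) (a := b) (m := 0)
    (fun x _ => by simpa using (hasDerivAt_auxG k x).fun_neg)
    (integrableOn_pow_exp (2 * k + 1) hb)
    (by simpa using (tendsto_auxG k).neg)
  rw [h]; ring

lemma auxQ_closed_form (k : ℕ) (b : ℝ) :
    auxQ k b = 2 ^ k * (Nat.factorial k) *
      ∑ j ∈ Finset.range (k+1), (b ^ 2 / 2) ^ j / (Nat.factorial j) := by
  induction k with
  | zero => simp [auxQ]
  | succ k ih =>
    rw [Finset.sum_range_succ]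
    simp only [auxQ, ih, Nat.factorial_succ]
    have h1 : b ^ (2 * (k+1)) = (b ^ 2) ^ (k+1) := by rw [pow_mul]
    have h2 : ((Nat.factorial (k+1) : ℝ)) ≠ 0 := Nat.cast_ne_zero.mpr (Nat.factorial_ne_zero _)
    have h3 : (b ^ 2 / 2) ^ (k+1) = (b^2)^(k+1) / 2^(k+1) := div_pow _ _ _
    rw [h1, h3]
    push_cast
    field_simp
    ring

lemma summable_bessel_terms (x : ℝ) :
    Summable (fun k : ℕ => (x / 2) ^ (2 * k) / (Nat.factorial k : ℝ) ^ 2) := by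
  apply Summable.of_nonneg_of_le (fun k => by rw [pow_mul]; positivity)
    (fun k => ?_) (Real.summable_pow_div_factorial ((x/2)^2))
  rw [pow_mul]
  apply div_le_div_of_nonneg_left (by positivity) (by positivity)
  calc (Nat.factorial k : ℝ) = (Nat.factorial k : ℝ) * 1 := by ring
    _ ≤ (Nat.factorial k : ℝ) * (Nat.factorial k : ℝ) := by
        apply mul_le_mul_of_nonneg_left _ (by positivity)
        exact_mod_cast Nat.one_le_iff_ne_zero.mpr (Nat.factorial_ne_zero k)
    _ = (Nat.factorial k : ℝ) ^ 2 := by ring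

lemma besselI0_nonneg (x : ℝ) : 0 ≤ besselI0 x :=
  tsum_nonneg fun k => by rw [pow_mul]; positivity

/-- For `b > a ≥ 0`, `Q₁(a,b) ≤ exp(-(b-a)²/2)`. -/
theorem stmt_10 (a b : ℝ) (ha : 0 ≤ a) (hab : a < b) :
    marcumQ1 a b ≤ Real.exp (-(b - a) ^ 2 / 2) := by
  have hb : 0 < b := lt_of_le_of_lt ha hab
  set f : ℝ → ℝ := fun t => t * Real.exp (-(t ^ 2 + a ^ 2) / 2) * besselI0 (a * t) with hf
  by_cases hint : Integrable f (volume.restrict (Set.Ioi b))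
  case neg =>
    rw [marcumQ1, integral_undef hint]
    positivity
  -- g k is the k-th term
  set g : ℕ → ℝ → ℝ := fun k t =>
    t * Real.exp (-(t ^ 2 + a ^ 2) / 2) * ((a * t / 2) ^ (2 * k) / (Nat.factorial k : ℝ) ^ 2)
    with hg
  have hg_nonneg : ∀ k t, t ∈ Set.Ioi b → 0 ≤ g k t := by
    intro k t ht
    have ht' : 0 < t := lt_trans hb ht
    simp only [hg]
    rw [pow_mul]
    positivity
  have hf_nonneg : ∀ t ∈ Set.Ioi b, 0 ≤ f t := by
    intro t ht
    have ht' : 0 < t := lt_trans hb ht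
    have := besselI0_nonneg (a * t)
    positivity
  -- pointwise: ofReal f = ∑' ofReal (g k)
  have hpt : ∀ t ∈ Set.Ioi b, ENNReal.ofReal (f t) = ∑' k, ENNReal.ofReal (g k t) := by
    intro t ht
    have hsum : f t = ∑' k, g k t := by
      simp only [hf, hg, besselI0]
      rw [← tsum_mul_left]
    rw [hsum, ENNReal.ofReal_tsum_of_nonneg (fun k => hg_nonneg k t ht)]
    exact (summable_bessel_terms (a * t)).mul_left _
  -- the rewriting of g k as constant * (t^(2k+1) exp(-t²/2))
  have hg_eq : ∀ k t, g k t =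
      (Real.exp (-a ^ 2 / 2) * a ^ (2 * k) / (2 ^ (2 * k) * (Nat.factorial k : ℝ) ^ 2)) *
        (t ^ (2 * k + 1) * Real.exp (-t ^ 2 / 2)) := by
    intro k t
    simp only [hg]
    rw [show -(t ^ 2 + a ^ 2) / 2 = -t ^ 2 / 2 + -a ^ 2 / 2 by ring, Real.exp_add,
      div_pow, mul_pow]
    field_simp
    ring
  -- integrability of g k
  have hg_int : ∀ k, IntegrableOn (g k) (Set.Ioi b) := by
    intro k
    have h : IntegrableOn (fun t : ℝ =>
        (Real.exp (-a ^ 2 / 2) * a ^ (2 * k) / (2 ^ (2 * k) * (Nat.factorial k : ℝ) ^ 2)) *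
          (t ^ (2 * k + 1) * Real.exp (-t ^ 2 / 2))) (Set.Ioi b) :=
      (integrableOn_pow_exp (2 * k + 1) hb).const_mul _
    exact h.congr_fun (fun t _ => (hg_eq k t).symm) measurableSet_Ioi
  -- value of the integral of g k
  have hg_val : ∀ k, ∫ t in Set.Ioi b, g k t =
      Real.exp (-(a ^ 2 + b ^ 2) / 2) * ((a ^ 2 / 2) ^ k / (Nat.factorial k : ℝ) *
        ∑ j ∈ Finset.range (k+1), (b ^ 2 / 2) ^ j / (Nat.factorial j : ℝ)) := by
    intro k
    rw [setIntegral_congr_fun measurableSet_Ioi (fun t _ => hg_eq k t),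
      MeasureTheory.integral_const_mul, integral_pow_exp k hb, auxQ_closed_form]
    rw [show -(a ^ 2 + b ^ 2) / 2 = -a ^ 2 / 2 + -b ^ 2 / 2 by ring, Real.exp_add]
    have hk : (Nat.factorial k : ℝ) ≠ 0 := Nat.cast_ne_zero.mpr (Nat.factorial_ne_zero _)
    have h2 : (a ^ 2 / 2) ^ k = a ^ (2 * k) / 2 ^ k := by
      rw [pow_mul, div_pow]
    rw [h2]
    have h4 : (2:ℝ) ^ (2 * k) = 2 ^ k * 2 ^ k := by rw [two_mul, pow_add]
    rw [h4]
    field_simp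
  -- per-k bound
  have hg_bound : ∀ k, ∫ t in Set.Ioi b, g k t ≤
      Real.exp (-(a ^ 2 + b ^ 2) / 2) * ((a * b / 2) ^ k / (Nat.factorial k : ℝ) *
        ∑ j ∈ Finset.range (k+1), (a * b / 2) ^ j / (Nat.factorial j : ℝ)) := by
    intro k
    rw [hg_val k]
    apply mul_le_mul_of_nonneg_left _ (Real.exp_nonneg _)
    have key : ∀ j ∈ Finset.range (k+1),
        (a ^ 2 / 2) ^ k / (Nat.factorial k : ℝ) * ((b ^ 2 / 2) ^ j / (Nat.factorial j : ℝ)) ≤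
        (a * b / 2) ^ k / (Nat.factorial k : ℝ) * ((a * b / 2) ^ j / (Nat.factorial j : ℝ)) := by
      intro j hj
      obtain ⟨d, rfl⟩ := Nat.exists_eq_add_of_le (Finset.mem_range_succ_iff.mp hj)
      have h2 : a ^ (j+d) * b ^ j ≤ b ^ (j+d) * a ^ j := by
        have h1 : a ^ d ≤ b ^ d := pow_le_pow_left₀ ha hab.le d
        calc a ^ (j+d) * b ^ j = (a ^ j * b ^ j) * a ^ d := by rw [pow_add]; ring
          _ ≤ (a ^ j * b ^ j) * b ^ d := mul_le_mul_of_nonneg_left h1 (by positivity)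
          _ = b ^ (j+d) * a ^ j := by rw [pow_add]; ring
      have hU : (a ^ (j+d)) ^ 2 * (b ^ j) ^ 2 ≤ (a ^ (j+d) * b ^ (j+d)) * (a ^ j * b ^ j) := by
        calc (a ^ (j+d)) ^ 2 * (b ^ j) ^ 2 = (a ^ (j+d) * b ^ j) * (a ^ (j+d) * b ^ j) := by ring
          _ ≤ (a ^ (j+d) * b ^ j) * (b ^ (j+d) * a ^ j) :=
              mul_le_mul_of_nonneg_left h2 (by positivity)
          _ = (a ^ (j+d) * b ^ (j+d)) * (a ^ j * b ^ j) := by ring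
      have key2 : ∀ (x : ℝ) (n : ℕ), (x ^ 2 / 2) ^ n = (x ^ n) ^ 2 / 2 ^ n := by
        intro x n
        rw [div_pow]
        congr 1
        rw [← pow_mul, ← pow_mul, Nat.mul_comm]
      have hcore : (a ^ 2 / 2) ^ (j + d) * (b ^ 2 / 2) ^ j ≤
          (a * b / 2) ^ (j + d) * (a * b / 2) ^ j := by
        rw [key2 a (j+d), key2 b j, div_pow, mul_pow, div_pow, mul_pow,
          div_mul_div_comm, div_mul_div_comm]
        exact div_le_div_of_nonneg_right hU (by positivity)
      have hfac : (0:ℝ) < (Nat.factorial (j+d) : ℝ) * (Nat.factorial j : ℝ) := by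
        positivity
      rw [div_mul_div_comm, div_mul_div_comm]
      exact div_le_div_of_nonneg_right hcore hfac.le
    rw [Finset.mul_sum, Finset.mul_sum]
    exact Finset.sum_le_sum key
  -- nonnegativity of the per-k bound targets
  set T : ℕ → ℝ := fun k =>
    Real.exp (-(a ^ 2 + b ^ 2) / 2) * ((a * b / 2) ^ k / (Nat.factorial k : ℝ) *
      ∑ j ∈ Finset.range (k+1), (a * b / 2) ^ j / (Nat.factorial j : ℝ)) with hT
  have hT_nonneg : ∀ k, 0 ≤ T k := by
    intro k
    have hab2 : 0 ≤ a * b / 2 := by positivity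
    apply mul_nonneg (Real.exp_nonneg _)
    apply mul_nonneg (by positivity)
    exact Finset.sum_nonneg fun j _ => by positivity
  -- the sum of T over any finset is bounded by the target
  have hTsum : ∀ s : Finset ℕ, ∑ k ∈ s, T k ≤ Real.exp (-(b - a) ^ 2 / 2) := by
    intro s
    obtain ⟨n, hn⟩ := s.exists_nat_subset_range
    have hstep : ∑ k ∈ s, T k ≤ ∑ k ∈ Finset.range n, T k :=
      Finset.sum_le_sum_of_subset_of_nonneg hn (fun k _ _ => hT_nonneg k)
    have hu : 0 ≤ a * b / 2 := by positivity
    have hexpu : ∀ k : ℕ, ∑ j ∈ Finset.range (k+1), (a * b / 2) ^ j / (Nat.factorial j : ℝ)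
        ≤ Real.exp (a * b / 2) := fun k => Real.sum_le_exp_of_nonneg hu (k+1)
    have hstep2 : ∑ k ∈ Finset.range n, T k ≤
        Real.exp (-(a ^ 2 + b ^ 2) / 2) * (Real.exp (a * b / 2) * Real.exp (a * b / 2)) := by
      calc ∑ k ∈ Finset.range n, T k
          ≤ ∑ k ∈ Finset.range n, Real.exp (-(a ^ 2 + b ^ 2) / 2) *
              ((a * b / 2) ^ k / (Nat.factorial k : ℝ) * Real.exp (a * b / 2)) := by
            apply Finset.sum_le_sum
            intro k _
            apply mul_le_mul_of_nonneg_left _ (Real.exp_nonneg _)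
            exact mul_le_mul_of_nonneg_left (hexpu k) (by positivity)
        _ = Real.exp (-(a ^ 2 + b ^ 2) / 2) * Real.exp (a * b / 2) *
              ∑ k ∈ Finset.range n, (a * b / 2) ^ k / (Nat.factorial k : ℝ) := by
            rw [Finset.mul_sum]
            apply Finset.sum_congr rfl
            intro k _
            ring
        _ ≤ Real.exp (-(a ^ 2 + b ^ 2) / 2) * Real.exp (a * b / 2) * Real.exp (a * b / 2) := by
            apply mul_le_mul_of_nonneg_left (Real.sum_le_exp_of_nonneg hu n) (by positivity)
        _ = Real.exp (-(a ^ 2 + b ^ 2) / 2) * (Real.exp (a * b / 2) * Real.exp (a * b / 2)) := by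
            ring
    have hfinal : Real.exp (-(a ^ 2 + b ^ 2) / 2) * (Real.exp (a * b / 2) * Real.exp (a * b / 2))
        = Real.exp (-(b - a) ^ 2 / 2) := by
      rw [← Real.exp_add, ← Real.exp_add]
      congr 1
      ring
    linarith
  -- assemble
  have hmeas_g : ∀ k, AEMeasurable (fun t => ENNReal.ofReal (g k t))
      (volume.restrict (Set.Ioi b)) := by
    intro k
    apply Measurable.aemeasurable
    apply Measurable.ennreal_ofReal
    simp only [hg]
    fun_prop
  have h0 : marcumQ1 a b = (∫⁻ t in Set.Ioi b, ENNReal.ofReal (f t)).toReal := by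
    rw [marcumQ1]
    exact integral_eq_lintegral_of_nonneg_ae
      ((ae_restrict_iff' measurableSet_Ioi).mpr (Filter.Eventually.of_forall hf_nonneg))
      hint.aestronglyMeasurable
  have h1 : ∫⁻ t in Set.Ioi b, ENNReal.ofReal (f t)
      = ∑' k, ∫⁻ t in Set.Ioi b, ENNReal.ofReal (g k t) := by
    rw [setLIntegral_congr_fun measurableSet_Ioi
      (fun t ht => hpt t ht)]
    exact lintegral_tsum hmeas_g
  have h2 : ∀ k, ∫⁻ t in Set.Ioi b, ENNReal.ofReal (g k t)
      = ENNReal.ofReal (∫ t in Set.Ioi b, g k t) := by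
    intro k
    exact (ofReal_integral_eq_lintegral_ofReal (hg_int k)
      ((ae_restrict_iff' measurableSet_Ioi).mpr
        (Filter.Eventually.of_forall fun t ht => hg_nonneg k t ht))).symm
  rw [h0, h1]
  apply ENNReal.toReal_le_of_le_ofReal (Real.exp_nonneg _)
  calc ∑' k, ∫⁻ t in Set.Ioi b, ENNReal.ofReal (g k t)
      = ∑' k, ENNReal.ofReal (∫ t in Set.Ioi b, g k t) := by
        exact tsum_congr fun k => h2 k
    _ ≤ ∑' k, ENNReal.ofReal (T k) :=
        ENNReal.tsum_le_tsum fun k => ENNReal.ofReal_le_ofReal (hg_bound k)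
    _ ≤ ENNReal.ofReal (Real.exp (-(b - a) ^ 2 / 2)) := by
        apply ENNReal.summable.tsum_le_of_sum_le
        intro s
        rw [← ENNReal.ofReal_sum_of_nonneg fun k _ => hT_nonneg k]
        exact ENNReal.ofReal_le_ofReal (hTsum s)
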